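/- Let A ⊆ ℤ_{≥0}^d be compressed and J_1, J_2 ⊆ {1,...,d}. Then the map (x, y) ↦ (p_{J_1 ∩ φ(J_2)}(x), x + Φ(y)) from p_{J_1}(A) × p_{J_2}(A) to p_{J_1 ∩ φ(J_2)}(A) × (A + Φ(A)) is a well-defined injection, where φ(J) = {j+1 : j ∈ J} and Φ is the coordinate shift. -/
import Mathlib


open scoped Pointwise

/-- Projection onto the coordinates indexed by `J`, zeroing the others. -/
def projI {d : ℕ} (J : Finset (Fin d)) (x : Fin d → ℕ) : Fin d → ℕ :=
  fun i => if i ∈ J then x i else 0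

/-- The inclusion `(x_1,…,x_d) ↦ (x_1,…,x_d,0)` of `ℤ_{≥0}^d` into `ℤ_{≥0}^{d+1}`. -/
def inclMap {d : ℕ} (x : Fin d → ℕ) : Fin (d + 1) → ℕ := Fin.snoc x 0

/-- The shift map `(x_1,…,x_d) ↦ (0,x_1,…,x_d)`. -/
def shiftMap {d : ℕ} (x : Fin d → ℕ) : Fin (d + 1) → ℕ := Fin.cons 0 x

/-- `A` is compressed: it is downward closed in each coordinate. -/
def IsCompressed {d : ℕ} (A : Finset (Fin d → ℕ)) : Prop :=
  ∀ a ∈ A, ∀ b : Fin d → ℕ, (∀ i, b i ≤ a i) → b ∈ A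

/-- `φ(J) = {j + 1 : j ∈ J}` as a subset of the coordinates. -/
def phiSet {d : ℕ} (J : Finset (Fin d)) : Finset (Fin d) :=
  Finset.univ.filter (fun i => ∃ j ∈ J, (i : ℕ) = (j : ℕ) + 1)

lemma projI_le {d : ℕ} (J : Finset (Fin d)) (x : Fin d → ℕ) (i : Fin d) :
    projI J x i ≤ x i := by
  unfold projI; split <;> simp

lemma projI_mem {d : ℕ} {A : Finset (Fin d → ℕ)} (hA : IsCompressed A)
    (J : Finset (Fin d)) {a : Fin d → ℕ} (ha : a ∈ A) : projI J a ∈ A :=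
  hA a ha _ (projI_le J a)

theorem injection_into_product {d : ℕ} (A : Finset (Fin d → ℕ))
    (hA : IsCompressed A) (J₁ J₂ : Finset (Fin d)) :
    Set.MapsTo (fun p : (Fin d → ℕ) × (Fin d → ℕ) =>
        (projI (J₁ ∩ phiSet J₂) p.1, inclMap p.1 + shiftMap p.2))
      ((A.image (projI J₁)) ×ˢ (A.image (projI J₂)))
      ((A.image (projI (J₁ ∩ phiSet J₂))) ×ˢ (A.image inclMap + A.image shiftMap)) ∧
    Set.InjOn (fun p : (Fin d → ℕ) × (Fin d → ℕ) =>
        (projI (J₁ ∩ phiSet J₂) p.1, inclMap p.1 + shiftMap p.2))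
      ((A.image (projI J₁)) ×ˢ (A.image (projI J₂))) := by
  constructor
  · rintro ⟨x, y⟩ hp
    simp only [Finset.coe_product, Set.mem_prod, Finset.mem_coe, Finset.mem_image] at hp ⊢
    obtain ⟨⟨a, ha, rfl⟩, ⟨b, hb, rfl⟩⟩ := hp
    have hxA : projI J₁ a ∈ A := projI_mem hA _ ha
    have hyA : projI J₂ b ∈ A := projI_mem hA _ hb
    refine ⟨⟨_, hxA, rfl⟩, ?_⟩
    exact Finset.add_mem_add (Finset.mem_image_of_mem _ hxA) (Finset.mem_image_of_mem _ hyA)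
  · rintro ⟨x, y⟩ hp ⟨x', y'⟩ hp' heq
    simp only [Finset.coe_product, Set.mem_prod, Finset.mem_coe, Finset.mem_image] at hp hp'
    obtain ⟨⟨a, ha, rfl⟩, ⟨b, hb, rfl⟩⟩ := hp
    obtain ⟨⟨a', ha', rfl⟩, ⟨b', hb', rfl⟩⟩ := hp'
    simp only [Prod.mk.injEq] at heq
    obtain ⟨h1, h2⟩ := heq
    set x := projI J₁ a with hxdef
    set x' := projI J₁ a' with hx'def
    set y := projI J₂ b with hydef
    set y' := projI J₂ b' with hy'def
    have h2' : ∀ k : Fin (d + 1),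
        Fin.snoc (α := fun _ => ℕ) x 0 k + Fin.cons (α := fun _ => ℕ) 0 y k
          = Fin.snoc (α := fun _ => ℕ) x' 0 k + Fin.cons (α := fun _ => ℕ) 0 y' k := by
      intro k
      have := congrFun h2 k
      simpa only [Pi.add_apply, inclMap, shiftMap] using this
    have hx : x = x' := by
      funext i
      by_cases hiS : i ∈ J₁ ∩ phiSet J₂
      · have := congrFun h1 i
        simpa [projI, hiS] using this
      · by_cases hi1 : i ∈ J₁
        · have hiφ : i ∉ phiSet J₂ := fun h => hiS (Finset.mem_inter.2 ⟨hi1, h⟩)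
          have hk := h2' i.castSucc
          rw [Fin.snoc_castSucc, Fin.snoc_castSucc] at hk
          by_cases hi0 : (i : ℕ) = 0
          · have hc : i.castSucc = 0 := by ext; simpa using hi0
            rw [hc, Fin.cons_zero, Fin.cons_zero] at hk
            simpa using hk
          · have hlt : (i : ℕ) - 1 < d := by omega
            set j : Fin d := ⟨(i : ℕ) - 1, hlt⟩ with hj
            have hc : i.castSucc = j.succ := by
              ext; simp [hj]; omega
            have hjJ₂ : j ∉ J₂ := by
              intro hjm
              exact hiφ (by simp [phiSet]; exact ⟨j, hjm, by simp [hj]; omega⟩)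
            rw [hc, Fin.cons_succ, Fin.cons_succ] at hk
            have hy0 : y j = 0 := by simp [hydef, projI, hjJ₂]
            have hy'0 : y' j = 0 := by simp [hy'def, projI, hjJ₂]
            rw [hy0, hy'0] at hk
            simpa using hk
        · simp [hxdef, hx'def, projI, hi1]
    have hy : y = y' := by
      funext j
      have hk := h2' j.succ
      rw [Fin.cons_succ, Fin.cons_succ, hx] at hk
      exact Nat.add_left_cancel hk
    simp [hx, hy]
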